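/- arXiv:1111.3407 — 7 statements merged into one kernel-verified Lean document; each statement's English description precedes it below -/
import Mathlib

section
/- Let A and B be elements of SL(2,ℂ) such that t := Tr(A) is real with t > 2. Suppose Tr(AⁿB) ≠ 0 for every integer n ≥ 0, and that Tr(AB)/Tr(B) ≠ (t − √(t² − 4))/2. Then the sequence of ratios Tr(AⁿB)/Tr(Aⁿ⁻¹B) converges, as n → ∞, to Tr(A)·(1 + √(1 − (2/Tr(A))²))/2, i.e. to (t + √(t² − 4))/2, which is the attracting fixed point of the Möbius map z ↦ Tr(A) − 1/z. -/
private theorem aux_sq_entries (a b c d : ℂ) (h : a * d - b * c = 1) :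
    !![a, b; c, d] * !![a, b; c, d] = (a + d) • !![a, b; c, d] - 1 := by
  ext i j
  fin_cases i <;> fin_cases j <;>
    simp [Matrix.mul_apply, Fin.sum_univ_two, Matrix.one_apply] <;>
    first | ring1 | linear_combination -h

private theorem sl2_sq' (M : Matrix (Fin 2) (Fin 2) ℂ) (h : M.det = 1) :
    M * M = M.trace • M - 1 := by
  rw [Matrix.det_fin_two] at h
  rw [Matrix.eta_fin_two M, Matrix.trace_fin_two]
  exact aux_sq_entries _ _ _ _ (by linear_combination h)

/-- For A, B ∈ SL(2,ℂ) with Tr A real and > 2, if Tr(AⁿB) ≠ 0 for all n ≥ 0 and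
    Tr(AB)/Tr(B) ≠ (t − √(t²−4))/2, then Tr(AⁿB)/Tr(Aⁿ⁻¹B) converges to
    (t + √(t²−4))/2, the attracting fixed point of z ↦ Tr(A) − 1/z. -/
theorem tendsto_trace_ratio_hyperbolic
    (A B : Matrix.SpecialLinearGroup (Fin 2) ℂ) (t : ℝ) (ht : 2 < t)
    (htr : ((A : Matrix (Fin 2) (Fin 2) ℂ)).trace = (t : ℂ))
    (hne : ∀ n : ℕ,
      ((A ^ n * B : Matrix.SpecialLinearGroup (Fin 2) ℂ) :
        Matrix (Fin 2) (Fin 2) ℂ).trace ≠ 0)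
    (hstart :
      ((A * B : Matrix.SpecialLinearGroup (Fin 2) ℂ) :
        Matrix (Fin 2) (Fin 2) ℂ).trace /
        ((B : Matrix (Fin 2) (Fin 2) ℂ)).trace ≠
      (((t - Real.sqrt (t ^ 2 - 4)) / 2 : ℝ) : ℂ)) :
    Filter.Tendsto
      (fun n : ℕ =>
        ((A ^ (n + 1) * B : Matrix.SpecialLinearGroup (Fin 2) ℂ) :
          Matrix (Fin 2) (Fin 2) ℂ).trace /
        ((A ^ n * B : Matrix.SpecialLinearGroup (Fin 2) ℂ) :
          Matrix (Fin 2) (Fin 2) ℂ).trace)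
      Filter.atTop
      (nhds (((t + Real.sqrt (t ^ 2 - 4)) / 2 : ℝ) : ℂ)) := by
  set s : ℝ := Real.sqrt (t ^ 2 - 4) with hs_def
  have hs4 : (0 : ℝ) < t ^ 2 - 4 := by nlinarith
  have hs2 : s ^ 2 = t ^ 2 - 4 := Real.sq_sqrt hs4.le
  have hspos : 0 < s := Real.sqrt_pos.mpr hs4
  set l : ℝ := (t + s) / 2 with hl_def
  set m : ℝ := (t - s) / 2 with hm_def
  have hst : s < t := by nlinarith
  have hlm : l * m = 1 := by
    rw [hl_def, hm_def]; linear_combination (-(1:ℝ)/4) * hs2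
  have hmpos : 0 < m := by rw [hm_def]; linarith
  have hl1 : 1 < l := by rw [hl_def]; linarith
  have hm1 : m < 1 := by nlinarith
  set L : ℂ := (l : ℂ) with hL_def
  set M : ℂ := (m : ℂ) with hM_def
  have hLM : L * M = 1 := by
    rw [hL_def, hM_def, ← Complex.ofReal_mul, hlm, Complex.ofReal_one]
  have hsumC : ((t : ℝ) : ℂ) = L + M := by
    rw [hL_def, hM_def, hl_def, hm_def]; push_cast; ring
  have hLne : L - M ≠ 0 := by
    rw [hL_def, hM_def, hl_def, hm_def]
    simp only [ne_eq, sub_eq_zero]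
    intro h
    have : l = m := by exact_mod_cast h
    rw [hl_def, hm_def] at this; linarith
  have hL0 : L ≠ 0 := by
    rw [hL_def]; exact_mod_cast (by linarith : l ≠ 0)
  -- the trace sequence
  set c : ℕ → ℂ := fun n =>
    ((A ^ n * B : Matrix.SpecialLinearGroup (Fin 2) ℂ) :
      Matrix (Fin 2) (Fin 2) ℂ).trace with hc_def
  have hc_eq : ∀ n : ℕ, c n =
      (((A : Matrix (Fin 2) (Fin 2) ℂ)) ^ n * (B : Matrix (Fin 2) (Fin 2) ℂ)).trace := by
    intro n; simp [hc_def]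
  have hA2 : (A : Matrix (Fin 2) (Fin 2) ℂ) * (A : Matrix (Fin 2) (Fin 2) ℂ)
      = (t : ℂ) • (A : Matrix (Fin 2) (Fin 2) ℂ) - 1 := by
    rw [← htr]; exact sl2_sq' _ A.2
  have hrec : ∀ n : ℕ, c (n + 2) = (t : ℂ) * c (n + 1) - c n := by
    intro n
    have h2 : (A : Matrix (Fin 2) (Fin 2) ℂ) ^ (n + 2)
        = (t : ℂ) • (A : Matrix (Fin 2) (Fin 2) ℂ) ^ (n + 1)
          - (A : Matrix (Fin 2) (Fin 2) ℂ) ^ n := by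
      rw [pow_add, pow_two, hA2, mul_sub, mul_smul_comm, mul_one, ← pow_succ]
    rw [hc_eq, hc_eq, hc_eq, h2, sub_mul, Matrix.smul_mul, Matrix.trace_sub,
      Matrix.trace_smul, smul_eq_mul]
  set α : ℂ := (c 1 - M * c 0) / (L - M) with hα_def
  set β : ℂ := (L * c 0 - c 1) / (L - M) with hβ_def
  have hform : ∀ n : ℕ, c n = α * L ^ n + β * M ^ n := by
    have key : ∀ n : ℕ,
        c n = α * L ^ n + β * M ^ n ∧ c (n + 1) = α * L ^ (n + 1) + β * M ^ (n + 1) := by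
      intro n
      induction n with
      | zero =>
        constructor
        · rw [hα_def, hβ_def]; field_simp; ring
        · rw [hα_def, hβ_def]; field_simp; ring
      | succ n ih =>
        refine ⟨ih.2, ?_⟩
        rw [hrec n, hsumC]
        linear_combination (L + M) * ih.2 - ih.1 + (α * L ^ n + β * M ^ n) * hLM
    exact fun n => (key n).1
  have hc0 : c 0 ≠ 0 := hne 0
  have hc1 : c 1 = ((A * B : Matrix.SpecialLinearGroup (Fin 2) ℂ) :
      Matrix (Fin 2) (Fin 2) ℂ).trace := by
    rw [hc_def]; simp [pow_one]
  have hα : α ≠ 0 := by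
    rw [hα_def]
    apply div_ne_zero _ hLne
    rw [sub_ne_zero]
    intro h
    apply hstart
    have hc0' : ((B : Matrix (Fin 2) (Fin 2) ℂ)).trace ≠ 0 := by
      have := hne 0; simpa [hc_def] using hc0
    have hc0'' : c 0 = ((B : Matrix (Fin 2) (Fin 2) ℂ)).trace := by simp [hc_def]
    rw [← hc1, div_eq_iff hc0', h, hc0'']
  set r : ℂ := M / L with hr_def
  have hrnorm : ‖r‖ < 1 := by
    have : r = ((m / l : ℝ) : ℂ) := by rw [hr_def, hM_def, hL_def]; push_cast; ring
    rw [this, Complex.norm_real, Real.norm_eq_abs, abs_of_pos (by positivity)]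
    rw [div_lt_one (by linarith)]
    linarith
  have htend0 : Filter.Tendsto (fun n : ℕ => r ^ n) Filter.atTop (nhds 0) :=
    tendsto_pow_atTop_nhds_zero_of_norm_lt_one hrnorm
  have htendg : Filter.Tendsto
      (fun n : ℕ => (α * L + β * M * r ^ n) / (α + β * r ^ n)) Filter.atTop
      (nhds ((α * L + β * M * 0) / (α + β * 0))) := by
    apply Filter.Tendsto.div
    · exact (tendsto_const_nhds.add ((tendsto_const_nhds.mul htend0)))
    · exact (tendsto_const_nhds.add ((tendsto_const_nhds.mul htend0)))
    · simpa using hα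
  have hlimit : (α * L + β * M * 0) / (α + β * 0) = L := by
    simp only [mul_zero, add_zero]; exact mul_div_cancel_left₀ _ hα
  rw [hlimit] at htendg
  have hfun_eq : ∀ n : ℕ, c (n + 1) / c n = (α * L + β * M * r ^ n) / (α + β * r ^ n) := by
    intro n
    have hLn : L ^ n ≠ 0 := pow_ne_zero n hL0
    have e1 : (α + β * r ^ n) * L ^ n = c n := by
      rw [hform n, hr_def, add_mul, mul_assoc, div_pow, div_mul_cancel₀ _ hLn]
    have e2 : (α * L + β * M * r ^ n) * L ^ n = c (n + 1) := by
      rw [hform (n + 1), hr_def, add_mul, mul_assoc (β * M), div_pow,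
        div_mul_cancel₀ _ hLn, pow_succ, pow_succ]
      ring
    rw [← e1, ← e2, mul_div_mul_right _ _ hLn]
  refine htendg.congr fun n => ?_
  rw [← hfun_eq n]
end

section
/- Let A and B be elements of SL(2,ℂ) with Tr(A) = 2 (A parabolic or the identity in trace) and Tr(AB) ≠ Tr(B). Then Tr(AⁿB) ≠ 0 for all sufficiently large n, and the sequence of ratios Tr(AⁿB)/Tr(Aⁿ⁻¹B) converges to 1 as n → ∞. -/
open Matrix Filter

lemma sq_eq_of_trace_det (M : Matrix (Fin 2) (Fin 2) ℂ)
    (hdet : M.det = 1) (htr : M.trace = 2) :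
    M ^ 2 = (2 : ℂ) • M - 1 := by
  rw [Matrix.det_fin_two] at hdet
  rw [Matrix.trace_fin_two] at htr
  ext i j
  fin_cases i <;> fin_cases j <;>
    simp [pow_two, Matrix.mul_apply, Fin.sum_univ_two, Matrix.one_apply,
      Matrix.smul_apply]
  · linear_combination M 0 0 * htr - hdet
  · linear_combination M 0 1 * htr
  · linear_combination M 1 0 * htr
  · linear_combination M 1 1 * htr - hdet

lemma lin_formula (c d : ℂ) (hd : d ≠ 0) :
    (∃ N : ℕ, ∀ n ≥ N, c + (n : ℂ) * d ≠ 0) ∧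
    Tendsto (fun n : ℕ => (c + ((n : ℂ) + 1) * d) / (c + (n : ℂ) * d))
      atTop (nhds 1) := by
  have hnorm : Tendsto (fun n : ℕ => ‖c + (n : ℂ) * d‖) atTop atTop := by
    have h1 : Tendsto (fun n : ℕ => (n : ℝ) * ‖d‖ - ‖c‖) atTop atTop :=
      (tendsto_natCast_atTop_atTop.atTop_mul_const (norm_pos_iff.2 hd)).atTop_add
        tendsto_const_nhds
    refine tendsto_atTop_mono (fun n => ?_) h1
    have h := norm_sub_norm_le ((n : ℂ) * d) (-c)
    rw [sub_neg_eq_add, norm_neg, add_comm ((n : ℂ) * d) c] at h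
    calc (n : ℝ) * ‖d‖ - ‖c‖ = ‖(n : ℂ) * d‖ - ‖c‖ := by
          rw [norm_mul, Complex.norm_natCast]
      _ ≤ ‖c + (n : ℂ) * d‖ := h
  have hev : ∀ᶠ n : ℕ in atTop, c + (n : ℂ) * d ≠ 0 := by
    filter_upwards [hnorm.eventually_ge_atTop 1] with n hn
    intro h; rw [h] at hn; simp at hn; linarith
  constructor
  · obtain ⟨N, hN⟩ := eventually_atTop.1 hev
    exact ⟨N, hN⟩
  · have hzero : Tendsto (fun n : ℕ => d / (c + (n : ℂ) * d)) atTop (nhds 0) := by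
      have hinv := hnorm.inv_tendsto_atTop
      have h2 := hinv.const_mul ‖d‖
      rw [mul_zero] at h2
      refine tendsto_zero_iff_norm_tendsto_zero.2 (h2.congr fun n => ?_)
      simp [norm_div, div_eq_mul_inv]
    have h3 : Tendsto (fun n : ℕ => 1 + d / (c + (n : ℂ) * d)) atTop (nhds 1) := by
      simpa using tendsto_const_nhds.add hzero
    refine h3.congr' ?_
    filter_upwards [hev] with n hn
    rw [eq_div_iff hn, add_mul, div_mul_cancel₀ _ hn]
    ring

/-- If Tr(A) = 2 and Tr(AB) ≠ Tr(B), then Tr(AⁿB) ≠ 0 for all large n and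
    Tr(AⁿB)/Tr(Aⁿ⁻¹B) → 1. -/
theorem tendsto_trace_ratio_parabolic
    (A B : Matrix.SpecialLinearGroup (Fin 2) ℂ)
    (htr : ((A : Matrix (Fin 2) (Fin 2) ℂ)).trace = 2)
    (hne :
      ((A * B : Matrix.SpecialLinearGroup (Fin 2) ℂ) :
        Matrix (Fin 2) (Fin 2) ℂ).trace ≠
      ((B : Matrix (Fin 2) (Fin 2) ℂ)).trace) :
    (∃ N : ℕ, ∀ n ≥ N,
      ((A ^ n * B : Matrix.SpecialLinearGroup (Fin 2) ℂ) :
        Matrix (Fin 2) (Fin 2) ℂ).trace ≠ 0) ∧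
    Filter.Tendsto
      (fun n : ℕ =>
        ((A ^ (n + 1) * B : Matrix.SpecialLinearGroup (Fin 2) ℂ) :
          Matrix (Fin 2) (Fin 2) ℂ).trace /
        ((A ^ n * B : Matrix.SpecialLinearGroup (Fin 2) ℂ) :
          Matrix (Fin 2) (Fin 2) ℂ).trace)
      Filter.atTop (nhds 1) := by
  set MA : Matrix (Fin 2) (Fin 2) ℂ := (A : Matrix (Fin 2) (Fin 2) ℂ)
  set MB : Matrix (Fin 2) (Fin 2) ℂ := (B : Matrix (Fin 2) (Fin 2) ℂ)
  set t : ℕ → ℂ := fun n => (MA ^ n * MB).trace with ht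
  have hcoe : ∀ n : ℕ, ((A ^ n * B : Matrix.SpecialLinearGroup (Fin 2) ℂ) :
      Matrix (Fin 2) (Fin 2) ℂ).trace = t n := by
    intro n; simp [t, MA, MB]
  have hsq : MA ^ 2 = (2 : ℂ) • MA - 1 :=
    sq_eq_of_trace_det MA (by simp [MA]) htr
  set c : ℂ := t 0
  set d : ℂ := t 1 - t 0 with hd
  have hdne : d ≠ 0 := by
    have h1 : t 1 = ((A * B : Matrix.SpecialLinearGroup (Fin 2) ℂ) :
        Matrix (Fin 2) (Fin 2) ℂ).trace := by simp [t, MA, MB]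
    have h0 : t 0 = ((B : Matrix (Fin 2) (Fin 2) ℂ)).trace := by simp [t, MB]
    rw [hd, h1, h0, sub_ne_zero]
    exact hne
  have hrec : ∀ n : ℕ, t (n + 2) = 2 * t (n + 1) - t n := by
    intro n
    have e1 : MA ^ (n + 2) * MB = (2 : ℂ) • (MA ^ (n + 1) * MB) - MA ^ n * MB := by
      rw [pow_add, hsq, Matrix.mul_sub, Matrix.mul_smul, Matrix.mul_one,
        Matrix.sub_mul, Matrix.smul_mul, ← pow_succ]
    show (MA ^ (n + 2) * MB).trace =
      2 * (MA ^ (n + 1) * MB).trace - (MA ^ n * MB).trace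
    rw [e1, Matrix.trace_sub, Matrix.trace_smul, smul_eq_mul]
  have hform : ∀ n : ℕ, t n = c + (n : ℂ) * d := by
    intro n
    induction n using Nat.twoStepInduction with
    | zero => simp [c]
    | one => simp [c, hd]
    | more n ih1 ih2 =>
      rw [hrec n, ih1, ih2]
      push_cast
      ring
  obtain ⟨⟨N, hN⟩, htend⟩ := lin_formula c d hdne
  constructor
  · exact ⟨N, fun n hn => by rw [hcoe, hform]; exact hN n hn⟩
  · refine htend.congr (fun n => ?_)
    rw [hcoe, hcoe, hform, hform]
    push_cast
    ring_nf
end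

section
/- Let t be a complex number not lying in the real segment [−2, 2], and let α and β be the two roots of z² − tz + 1 = 0, labelled so that |α| > 1 > |β|. Let (zₙ)ₙ≥0 be a sequence of complex numbers such that zₙ ≠ 0 for all n, z₀ ≠ β, and zₙ₊₁ = t − 1/zₙ for all n ≥ 0. Then the sequence (zₙ) converges to α. -/
/-- For t ∈ ℂ not a real number in [−2,2], with α, β the roots of z² − tz + 1 = 0
    labelled so that |α| > 1 > |β|, any orbit of z ↦ t − 1/z avoiding 0 and not
    starting at β converges to α. -/
theorem tendsto_orbit_attracting_fixed_point_loxodromic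
    (t : ℂ) (ht : ¬ ∃ x : ℝ, -2 ≤ x ∧ x ≤ 2 ∧ t = (x : ℂ))
    (α β : ℂ) (hα : α ^ 2 - t * α + 1 = 0) (hβ : β ^ 2 - t * β + 1 = 0)
    (hαβ : ‖β‖ < 1 ∧ 1 < ‖α‖)
    (z : ℕ → ℂ) (hz : ∀ n, z n ≠ 0) (hz0 : z 0 ≠ β)
    (hrec : ∀ n, z (n + 1) = t - 1 / z n) :
    Filter.Tendsto z Filter.atTop (nhds α) := by
  obtain ⟨hβ1, hα1⟩ := hαβ
  have hne : α ≠ β := by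
    intro h
    rw [h] at hα1
    exact absurd (hα1.trans hβ1) (lt_irrefl 1)
  have hsum : α + β = t := by
    have h : (α - β) * (α + β - t) = 0 := by linear_combination hα - hβ
    rcases mul_eq_zero.mp h with h1 | h1
    · exact absurd (sub_eq_zero.mp h1) hne
    · exact sub_eq_zero.mp h1
  have hprod : α * β = 1 := by linear_combination -hα + α * hsum
  have hα0 : α ≠ 0 := by
    intro h; rw [h, zero_mul] at hprod; exact zero_ne_one hprod
  have hβ0 : β ≠ 0 := by
    intro h; rw [h, mul_zero] at hprod; exact zero_ne_one hprod
  -- all iterates avoid β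
  have hzβ : ∀ n, z n ≠ β := by
    intro n
    induction n with
    | zero => exact hz0
    | succ n ih =>
      intro h
      apply ih
      have hzn := hz n
      have : α * (z n - β) = 0 := by
        have h2 : z n * (t - 1 / z n) = z n * β := by rw [← hrec n, h]
        have h3 : z n * t - 1 = z n * β := by
          field_simp at h2; linear_combination h2
        linear_combination h3 + (z n) * hsum - hprod
      rcases mul_eq_zero.mp this with h4 | h4
      · exact absurd h4 hα0
      · exact sub_eq_zero.mp h4
  set w : ℕ → ℂ := fun n => (z n - α) / (z n - β) with hw
  have hstep : ∀ n, w (n + 1) = (β / α) * w n := by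
    intro n
    have hzn := hz n
    have hznβ := sub_ne_zero.mpr (hzβ n)
    have hznβ' := sub_ne_zero.mpr (hzβ (n + 1))
    have h1 : z (n + 1) - α = β * (z n - α) / z n := by
      rw [hrec n]
      field_simp
      linear_combination hprod - (z n) * hsum
    have h2 : z (n + 1) - β = α * (z n - β) / z n := by
      rw [hrec n]
      field_simp
      linear_combination hprod - (z n) * hsum
    simp only [hw, h1, h2]
    field_simp
  have hwn : ∀ n, w n = (β / α) ^ n * w 0 := by
    intro n
    induction n with
    | zero => simp
    | succ n ih => rw [hstep n, ih]; ring
  have hratio : ‖β / α‖ < 1 := by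
    rw [norm_div]
    rw [div_lt_one (lt_trans one_pos hα1)]
    exact hβ1.trans hα1
  have hw0 : Filter.Tendsto w Filter.atTop (nhds 0) := by
    have h := tendsto_pow_atTop_nhds_zero_of_norm_lt_one (x := β / α) hratio
    have := h.mul_const (w 0)
    simpa only [zero_mul, ← hwn] using this
  -- recover z from w
  have hwne1 : ∀ n, w n ≠ 1 := by
    intro n h
    have hznβ := sub_ne_zero.mpr (hzβ n)
    have h5 : z n - α = z n - β := (div_eq_one_iff_eq hznβ).mp h
    exact hne (by linear_combination -h5)
  have hzn_eq : ∀ n, z n = (α - β * w n) / (1 - w n) := by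
    intro n
    have hznβ := sub_ne_zero.mpr (hzβ n)
    have h1 : (1 : ℂ) - w n ≠ 0 := sub_ne_zero.mpr (Ne.symm (hwne1 n))
    rw [eq_div_iff h1]
    simp only [hw]
    field_simp
    ring
  have hfinal : Filter.Tendsto (fun n => (α - β * w n) / (1 - w n)) Filter.atTop (nhds α) := by
    have hnum : Filter.Tendsto (fun n => α - β * w n) Filter.atTop (nhds α) := by
      have := (hw0.const_mul β).const_sub α
      simpa using this
    have hden : Filter.Tendsto (fun n => 1 - w n) Filter.atTop (nhds 1) := by
      have := hw0.const_sub (1 : ℂ)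
      simpa using this
    have := hnum.div hden one_ne_zero
    rw [div_one] at this
    exact this
  exact hfinal.congr (fun n => (hzn_eq n).symm)
end

section
/- Let λ, τ be complex numbers with sinh(λ/4) ≠ 0 and cosh(λ/4) ≠ 0. Define the 2×2 complex matrices A = [[cosh(λ/2), cosh(λ/2)+1], [cosh(λ/2)−1, cosh(λ/2)]] and B = [[cosh(τ/2)·cosh(λ/4)/sinh(λ/4), −sinh(τ/2)], [−sinh(τ/2), cosh(τ/2)·sinh(λ/4)/cosh(λ/4)]]. Then det(A) = 1, det(B) = 1, and the trace of the commutator A·B·A⁻¹·B⁻¹ equals −2, i.e. the commutator is parabolic. -/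
open Complex

set_option maxHeartbeats 1000000 in
/-- The explicit Fenchel–Nielsen matrix generators A, B have determinant 1 and
    parabolic commutator: Tr(ABA⁻¹B⁻¹) = −2. -/
theorem fenchel_nielsen_generators_det_and_parabolic_commutator
    (l τ : ℂ) (hs : Complex.sinh (l / 4) ≠ 0) (hc : Complex.cosh (l / 4) ≠ 0)
    (A B : Matrix (Fin 2) (Fin 2) ℂ)
    (hA : A = !![Complex.cosh (l / 2), Complex.cosh (l / 2) + 1;
                 Complex.cosh (l / 2) - 1, Complex.cosh (l / 2)])
    (hB : B = !![Complex.cosh (τ / 2) * Complex.cosh (l / 4) / Complex.sinh (l / 4),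
                 -Complex.sinh (τ / 2);
                 -Complex.sinh (τ / 2),
                 Complex.cosh (τ / 2) * Complex.sinh (l / 4) / Complex.cosh (l / 4)]) :
    A.det = 1 ∧ B.det = 1 ∧ (A * B * A⁻¹ * B⁻¹).trace = -2 := by
  set c := Complex.cosh (l / 4) with hcdef
  set s := Complex.sinh (l / 4) with hsdef
  set ct := Complex.cosh (τ / 2) with hctdef
  set st := Complex.sinh (τ / 2) with hstdef
  have h1 : c ^ 2 - s ^ 2 = 1 := Complex.cosh_sq_sub_sinh_sq _
  have h2 : ct ^ 2 - st ^ 2 = 1 := Complex.cosh_sq_sub_sinh_sq _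
  have hl2 : Complex.cosh (l / 2) = c ^ 2 + s ^ 2 := by
    rw [show l / 2 = l / 4 + l / 4 by ring, Complex.cosh_add, hcdef, hsdef]; ring
  rw [hl2] at hA
  have hdA : A.det = 1 := by
    rw [hA, Matrix.det_fin_two_of]; ring
  have hdB : B.det = 1 := by
    rw [hB, Matrix.det_fin_two_of]
    field_simp
    linear_combination h2
  refine ⟨hdA, hdB, ?_⟩
  have hAinv : A⁻¹ = !![c^2+s^2, -(c^2+s^2 + 1); -(c^2+s^2 - 1), c^2+s^2] := by
    apply Matrix.inv_eq_right_inv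
    rw [hA]
    ext i j
    fin_cases i <;> fin_cases j <;>
      simp [Matrix.mul_apply, Fin.sum_univ_two] <;> ring
  have hBinv : B⁻¹ = !![ct * s / c, st; st, ct * c / s] := by
    apply Matrix.inv_eq_right_inv
    rw [hB]
    ext i j
    fin_cases i <;> fin_cases j
    · simp [Matrix.mul_apply, Fin.sum_univ_two]
      field_simp
      linear_combination h2
    · simp [Matrix.mul_apply, Fin.sum_univ_two]
      field_simp
      ring
    · simp [Matrix.mul_apply, Fin.sum_univ_two]
      field_simp
      ring
    · simp [Matrix.mul_apply, Fin.sum_univ_two]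
      field_simp
      linear_combination h2
  rw [hAinv, hBinv, hA, hB]
  simp [Matrix.trace_fin_two, Matrix.mul_apply, Fin.sum_univ_two]
  field_simp
  linear_combination ((1*c^2*s^4*ct^2) + (2*s^2*st^2) + (-1*c^6*ct^2) + (2*s^2) + (1*s^6*ct^2) + (-1*s^4*ct^2) + (-2*s^2*ct^2) + (-1*c^4*s^2*ct^2) + (-1*c^4*ct^2) + (-2*c^2*s^2*ct^2)) * h1 + ((-2*s^4) + (-2*s^2)) * h2
end

section
/- Let c > 0 be a real number and set k = 2·cosh(c/2)/sinh(c/2) (so k > 2). Consider the map f(τ) = k·cosh(τ/2) on the open right half-strip S = {τ ∈ ℂ : Re τ > 0 and −π < Im τ < π}. Then f is injective on S, and its image f(S) equals the right half-plane minus a slit: f(S) = {w ∈ ℂ : Re w > 0} \ {w ∈ ℝ : 0 < w ≤ k}. -/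
section TraceMapHelpers

lemma cosh_form (x y : ℝ) :
    Complex.cosh (x + y * Complex.I) =
      (↑(Real.cosh x * Real.cos y) : ℂ) + (↑(Real.sinh x * Real.sin y) : ℂ) * Complex.I := by
  rw [Complex.cosh_add, Complex.cosh_mul_I, Complex.sinh_mul_I,
    ← Complex.ofReal_cosh, ← Complex.ofReal_sinh, ← Complex.ofReal_cos, ← Complex.ofReal_sin]
  push_cast; ring

lemma sinh_form (x y : ℝ) :
    Complex.sinh (x + y * Complex.I) =
      (↑(Real.sinh x * Real.cos y) : ℂ) + (↑(Real.cosh x * Real.sin y) : ℂ) * Complex.I := by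
  rw [Complex.sinh_add, Complex.cosh_mul_I, Complex.sinh_mul_I,
    ← Complex.ofReal_cosh, ← Complex.ofReal_sinh, ← Complex.ofReal_cos, ← Complex.ofReal_sin]
  push_cast; ring

lemma cosh_re' (z : ℂ) : (Complex.cosh z).re = Real.cosh z.re * Real.cos z.im := by
  conv_lhs => rw [← Complex.re_add_im z, cosh_form]
  simp [Complex.cosh_ofReal_re, Complex.sinh_ofReal_re, Complex.cos_ofReal_re,
    Complex.sin_ofReal_re, -Complex.ofReal_cos, -Complex.ofReal_sin, -Complex.ofReal_cosh,
    -Complex.ofReal_sinh]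

lemma cosh_im' (z : ℂ) : (Complex.cosh z).im = Real.sinh z.re * Real.sin z.im := by
  conv_lhs => rw [← Complex.re_add_im z, cosh_form]
  simp [Complex.cosh_ofReal_re, Complex.sinh_ofReal_re, Complex.cos_ofReal_re,
    Complex.sin_ofReal_re, -Complex.ofReal_cos, -Complex.ofReal_sin, -Complex.ofReal_cosh,
    -Complex.ofReal_sinh]

lemma sinh_zero_cases {z : ℂ} (h : Complex.sinh z = 0) : z.re = 0 ∧ Real.sin z.im = 0 := by
  rw [← Complex.re_add_im z, sinh_form] at h
  have h1 : Real.sinh z.re * Real.cos z.im = 0 := by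
    have := congrArg Complex.re h
    simpa [-Complex.ofReal_cos, -Complex.ofReal_sin, -Complex.ofReal_cosh,
      -Complex.ofReal_sinh] using this
  have h2 : Real.cosh z.re * Real.sin z.im = 0 := by
    have := congrArg Complex.im h
    simpa [-Complex.ofReal_cos, -Complex.ofReal_sin, -Complex.ofReal_cosh,
      -Complex.ofReal_sinh] using this
  have hs : Real.sin z.im = 0 := by
    rcases mul_eq_zero.1 h2 with h' | h'
    · exact absurd h' (ne_of_gt (Real.cosh_pos z.re))
    · exact h'
  refine ⟨?_, hs⟩
  have hc : Real.cos z.im ≠ 0 := by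
    have := Real.sin_sq_add_cos_sq z.im
    intro h0; rw [hs, h0] at this; norm_num at this
  have : Real.sinh z.re = 0 := by
    rcases mul_eq_zero.1 h1 with h' | h'
    · exact h'
    · exact absurd h' hc
  exact Real.sinh_eq_zero.1 this

lemma cosh_pq (p q : ℂ) : Complex.cosh (p + q) - Complex.cosh (p - q) =
    2 * Complex.sinh p * Complex.sinh q := by
  rw [Complex.cosh_add, Complex.cosh_sub]; ring

lemma cosh_diff (A B : ℂ) :
    Complex.cosh A - Complex.cosh B =
      2 * Complex.sinh ((A + B) / 2) * Complex.sinh ((A - B) / 2) := by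
  have := cosh_pq ((A + B) / 2) ((A - B) / 2)
  rw [show (A + B) / 2 + (A - B) / 2 = A by ring,
      show (A + B) / 2 - (A - B) / 2 = B by ring] at this
  exact this

lemma div_two_re (z : ℂ) : (z / 2).re = z.re / 2 := by
  rw [show (2:ℂ) = ((2:ℝ):ℂ) by norm_num, Complex.div_ofReal_re]

lemma div_two_im (z : ℂ) : (z / 2).im = z.im / 2 := by
  rw [show (2:ℂ) = ((2:ℝ):ℂ) by norm_num, Complex.div_ofReal_im]

lemma div_four_re (z : ℂ) : (z / 4).re = z.re / 4 := by
  rw [show (4:ℂ) = ((4:ℝ):ℂ) by norm_num, Complex.div_ofReal_re]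

lemma div_four_im (z : ℂ) : (z / 4).im = z.im / 4 := by
  rw [show (4:ℂ) = ((4:ℝ):ℂ) by norm_num, Complex.div_ofReal_im]

open Real in
lemma exists_xy (u v : ℝ) (hu : 0 < u) (hslit : v ≠ 0 ∨ 1 < u) :
    ∃ x y : ℝ, 0 < x ∧ -(π/2) < y ∧ y < π/2 ∧
      Real.cosh x * Real.cos y = u ∧ Real.sinh x * Real.sin y = v := by
  obtain ⟨s, hs⟩ : ∃ s, s = u^2 + v^2 := ⟨_, rfl⟩
  have hfac : (1+s)^2 - 4*u^2 = ((u-1)^2+v^2)*((u+1)^2+v^2) := by rw [hs]; ring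
  have sE : 0 ≤ (1+s)^2 - 4*u^2 := by rw [hfac]; positivity
  obtain ⟨D, hDdef⟩ : ∃ D, D = Real.sqrt ((1+s)^2 - 4*u^2) := ⟨_, rfl⟩
  have hD0 : 0 ≤ D := hDdef ▸ Real.sqrt_nonneg _
  have hD2 : D^2 = (1+s)^2 - 4*u^2 := by rw [hDdef]; exact Real.sq_sqrt sE
  have hD2' : D^2 = (1-s)^2 + 4*v^2 := by rw [hD2, hs]; ring
  obtain ⟨C2, hC2⟩ : ∃ C2, C2 = (1+s+D)/2 := ⟨_, rfl⟩
  have hquad : C2^2 - (1+s)*C2 + u^2 = 0 := by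
    have h4 : (2*C2 - (1+s))^2 = (1+s)^2 - 4*u^2 := by
      rw [hC2, ← hD2]; ring
    linear_combination h4 / 4
  have hDs1 : s - 1 ≤ D := by nlinarith [hD0, hD2', sq_nonneg v]
  have hC2gt1 : 1 < C2 := by
    rcases hslit with hv | hu1
    · have hv2 : 0 < v^2 := by positivity
      rw [hC2]
      nlinarith [hD0, hD2']
    · have hv0 : v = 0 ∨ v ≠ 0 := em _
      rcases hv0 with hv0 | hv0
      · have hsu : s = u^2 := by rw [hs, hv0]; ring
        have hDeq : D = s - 1 := by
          have h1 : (1+s)^2 - 4*u^2 = (s-1)^2 := by rw [hsu]; ring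
          rw [hDdef, h1, Real.sqrt_sq_eq_abs, abs_of_nonneg (by nlinarith)]
        rw [hC2, hDeq]
        nlinarith
      · have hv2 : 0 < v^2 := by positivity
        rw [hC2]
        nlinarith [hD0, hD2']
  have hC2pos : 0 < C2 := by linarith
  have hC2s : s ≤ C2 := by rw [hC2]; linarith
  have hu2 : u^2 = C2*(1+s) - C2^2 := by linear_combination hquad
  have hv2eq : v^2 = (C2-1)*(C2-s) := by linear_combination -hquad - hs
  have hce : C2 - u^2 = C2*(C2-s) := by linear_combination -hquad
  have hC2u : u^2 ≤ C2 := by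
    have hmul : 0 ≤ C2*(C2-s) := mul_nonneg hC2pos.le (by linarith)
    linarith
  have hspos : 0 ≤ s := by rw [hs]; positivity
  have hDle : D ≤ 1 + s := by
    have h1 : D^2 ≤ (1+s)^2 := by rw [hD2]; nlinarith [sq_nonneg u]
    have h2 := Real.sqrt_le_sqrt h1
    rwa [Real.sqrt_sq hD0, Real.sqrt_sq (by linarith : (0:ℝ) ≤ 1 + s)] at h2
  have hC2le : C2 ≤ 1 + s := by rw [hC2]; linarith
  obtain ⟨X, hXdef⟩ : ∃ X, X = Real.sqrt (C2 - 1) := ⟨_, rfl⟩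
  have hX0 : 0 < X := by rw [hXdef]; exact Real.sqrt_pos.2 (by linarith)
  have hX2 : X^2 = C2 - 1 := by rw [hXdef]; exact Real.sq_sqrt (by linarith)
  have hvX2 : v^2 ≤ X^2 := by
    rw [hX2, hv2eq]
    have h1 : C2 - s ≤ 1 := by linarith
    have h2 := mul_le_mul_of_nonneg_left h1 (by linarith : (0:ℝ) ≤ C2 - 1)
    linarith
  have habs : |v| ≤ X := by
    have h := Real.sqrt_le_sqrt hvX2
    rwa [Real.sqrt_sq_eq_abs, Real.sqrt_sq hX0.le] at h
  have hvle : v ≤ X := (abs_le.1 habs).2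
  have hvge : -X ≤ v := (abs_le.1 habs).1
  have hd1 : -1 ≤ v / X := by rw [le_div_iff₀ hX0]; linarith
  have hd2 : v / X ≤ 1 := by rw [div_le_one hX0]; linarith
  set y := Real.arcsin (v / X) with hy
  have hsiny : Real.sin y = v / X := Real.sin_arcsin hd1 hd2
  have hvXsq : (v/X)^2 = C2 - s := by
    rw [div_pow, hX2, hv2eq, mul_div_cancel_left₀ _ (by linarith : C2 - (1:ℝ) ≠ 0)]
  have h1mv : 1 - (v/X)^2 = u^2 / C2 := by
    rw [hvXsq, eq_div_iff (ne_of_gt hC2pos)]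
    linear_combination -hquad
  have hcosy : Real.cos y = u / Real.sqrt C2 := by
    rw [hy, Real.cos_arcsin, h1mv, Real.sqrt_div (sq_nonneg u), Real.sqrt_sq hu.le]
  have hsqrtC2 : 0 < Real.sqrt C2 := Real.sqrt_pos.2 hC2pos
  have hcosypos : 0 < Real.cos y := by rw [hcosy]; positivity
  set x := Real.arsinh X with hx
  have hx0 : 0 < x := Real.arsinh_pos_iff.2 hX0
  have hsinhx : Real.sinh x = X := Real.sinh_arsinh X
  have hcoshx : Real.cosh x = Real.sqrt C2 := by
    rw [hx, Real.cosh_arsinh]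
    congr 1
    linarith [hX2]
  have hy1 : -(π/2) < y := by
    rcases lt_or_eq_of_le (Real.neg_pi_div_two_le_arcsin (v/X)) with h | h
    · exact h
    · exfalso
      have hz : Real.cos y = 0 := by rw [hy, ← h, Real.cos_neg, Real.cos_pi_div_two]
      linarith
  have hy2 : y < π/2 := by
    rcases lt_or_eq_of_le (Real.arcsin_le_pi_div_two (v/X)) with h | h
    · exact h
    · exfalso
      have hz : Real.cos y = 0 := by rw [hy, h, Real.cos_pi_div_two]
      linarith
  refine ⟨x, y, hx0, hy1, hy2, ?_, ?_⟩
  · rw [hcoshx, hcosy, mul_div_cancel₀ _ (ne_of_gt hsqrtC2)]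
  · rw [hsinhx, hsiny, mul_div_cancel₀ _ (ne_of_gt hX0)]

end TraceMapHelpers

/-- For c > 0 and k = 2·coth(c/2) (> 2), the map τ ↦ k·cosh(τ/2) is injective on
    the open right half-strip {Re τ > 0, −π < Im τ < π} and its image is the open
    right half-plane minus the slit (0, k] on the real axis. -/
theorem trace_map_injective_and_image_on_half_strip
    (c : ℝ) (hc : 0 < c) (k : ℝ) (hk : k = 2 * Real.cosh (c / 2) / Real.sinh (c / 2))
    (f : ℂ → ℂ) (hf : f = fun τ : ℂ => (k : ℂ) * Complex.cosh (τ / 2))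
    (S : Set ℂ)
    (hS : S = {τ : ℂ | 0 < τ.re ∧ -Real.pi < τ.im ∧ τ.im < Real.pi}) :
    2 < k ∧ Set.InjOn f S ∧
      f '' S = {w : ℂ | 0 < w.re} \ {w : ℂ | ∃ x : ℝ, 0 < x ∧ x ≤ k ∧ w = (x : ℂ)} := by
  have hsh : 0 < Real.sinh (c / 2) := Real.sinh_pos_iff.2 (by linarith)
  have hch : Real.sinh (c / 2) < Real.cosh (c / 2) := by
    nlinarith [Real.cosh_sub_sinh (c / 2), Real.exp_pos (-(c / 2))]
  have hk2 : 2 < k := by rw [hk, lt_div_iff₀ hsh]; nlinarith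
  have hk0 : (0:ℝ) < k := by linarith
  have hkC : (k:ℂ) ≠ 0 := by exact_mod_cast ne_of_gt hk0
  refine ⟨hk2, ?_, ?_⟩
  · -- injectivity
    intro τ1 h1 τ2 h2 heq
    rw [hS] at h1 h2
    rw [hf] at heq
    simp only at heq
    have hc2 : Complex.cosh (τ1 / 2) = Complex.cosh (τ2 / 2) := mul_left_cancel₀ hkC heq
    have hd := cosh_diff (τ1 / 2) (τ2 / 2)
    rw [hc2, sub_self,
      show (τ1 / 2 + τ2 / 2) / 2 = (τ1 + τ2) / 4 by ring,
      show (τ1 / 2 - τ2 / 2) / 2 = (τ1 - τ2) / 4 by ring] at hd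
    have h0 : Complex.sinh ((τ1 + τ2) / 4) = 0 ∨ Complex.sinh ((τ1 - τ2) / 4) = 0 := by
      rcases mul_eq_zero.1 hd.symm with h' | h'
      · rcases mul_eq_zero.1 h' with h'' | h''
        · norm_num at h''
        · exact Or.inl h''
      · exact Or.inr h'
    rcases h0 with h' | h'
    · exfalso
      have := (sinh_zero_cases h').1
      rw [div_four_re, Complex.add_re] at this
      linarith [h1.1, h2.1]
    · obtain ⟨hre, him⟩ := sinh_zero_cases h'
      rw [div_four_re, Complex.sub_re] at hre
      rw [div_four_im, Complex.sub_im] at him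
      have hb : (τ1.im - τ2.im) / 4 = 0 := by
        have hpi := Real.pi_pos
        refine (Real.sin_eq_zero_iff_of_lt_of_lt ?_ ?_).1 him <;>
          [linarith [h1.2.1, h1.2.2, h2.2.1, h2.2.2]; linarith [h1.2.1, h1.2.2, h2.2.1, h2.2.2]]
      exact Complex.ext (by linarith) (by linarith)
  · -- image
    ext w
    constructor
    · rintro ⟨τ, hτ, rfl⟩
      rw [hS] at hτ
      obtain ⟨h1, h2, h3⟩ := hτ
      rw [hf]
      simp only
      have hre : ((k:ℂ) * Complex.cosh (τ/2)).re
          = k * (Real.cosh (τ.re/2) * Real.cos (τ.im/2)) := by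
        rw [Complex.re_ofReal_mul, cosh_re', div_two_re, div_two_im]
      have him : ((k:ℂ) * Complex.cosh (τ/2)).im
          = k * (Real.sinh (τ.re/2) * Real.sin (τ.im/2)) := by
        rw [Complex.im_ofReal_mul, cosh_im', div_two_re, div_two_im]
      have hcos : 0 < Real.cos (τ.im/2) :=
        Real.cos_pos_of_mem_Ioo ⟨by linarith, by linarith⟩
      constructor
      · show 0 < ((k:ℂ) * Complex.cosh (τ/2)).re
        rw [hre]
        positivity
      · rintro ⟨x, hx0, hxk, hwx⟩
        have himx : ((k:ℂ) * Complex.cosh (τ/2)).im = 0 := by rw [hwx]; simp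
        rw [him] at himx
        have hsinh : 0 < Real.sinh (τ.re/2) := Real.sinh_pos_iff.2 (by linarith)
        have hsin : Real.sin (τ.im/2) = 0 := by
          rcases mul_eq_zero.1 himx with h' | h'
          · exact absurd h' (ne_of_gt hk0)
          · rcases mul_eq_zero.1 h' with h'' | h''
            · exact absurd h'' (ne_of_gt hsinh)
            · exact h''
        have hpi := Real.pi_pos
        have him0 : τ.im / 2 = 0 :=
          (Real.sin_eq_zero_iff_of_lt_of_lt (by linarith) (by linarith)).1 hsin
        have hrex : ((k:ℂ) * Complex.cosh (τ/2)).re = x := by rw [hwx]; simp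
        rw [hre, him0, Real.cos_zero, mul_one] at hrex
        have : 1 < Real.cosh (τ.re/2) := Real.one_lt_cosh.2 (by positivity)
        nlinarith
    · rintro ⟨hw1, hw2⟩
      simp only [Set.mem_setOf_eq] at hw1 hw2
      have hu : 0 < w.re / k := div_pos hw1 hk0
      have hslit : w.im / k ≠ 0 ∨ 1 < w.re / k := by
        by_cases hb : w.im = 0
        · right
          have hwre : w = ((w.re : ℝ) : ℂ) := Complex.ext (by simp) (by simp [hb])
          by_contra hle
          push_neg at hle
          have hrek : w.re ≤ k := by
            rw [div_le_one hk0] at hle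
            exact hle
          exact hw2 ⟨w.re, hw1, hrek, hwre⟩
        · left
          exact div_ne_zero hb (ne_of_gt hk0)
      obtain ⟨x, y, hx0, hy1, hy2, hcc, hss⟩ := exists_xy (w.re / k) (w.im / k) hu hslit
      refine ⟨(↑(2*x) + ↑(2*y) * Complex.I : ℂ), ?_, ?_⟩
      · rw [hS]
        have hpi := Real.pi_pos
        refine ⟨?_, ?_, ?_⟩ <;> simp <;> linarith
      · rw [hf]
        simp only
        have hτ2 : ((↑(2*x) + ↑(2*y) * Complex.I : ℂ)) / 2 = (↑x + ↑y * Complex.I : ℂ) := by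
          push_cast; ring
        rw [hτ2, cosh_form, hcc, hss]
        rw [show ((k:ℝ):ℂ) * ((↑(w.re/k) : ℂ) + (↑(w.im/k) : ℂ) * Complex.I)
            = ↑w.re + ↑w.im * Complex.I from by
          push_cast
          field_simp]
        exact Complex.re_add_im w
end

section
/- Let d be a nonzero complex number with 2d² + 1 ≠ 0, and define the 2×2 complex matrices A_d = [[(d²+1)/d, d³/(2d²+1)], [(2d²+1)/d, d]] and B_d = [[(d²+1)/d, −d³/(2d²+1)], [−(2d²+1)/d, d]]. Then det(A_d) = 1, det(B_d) = 1, and the trace of the commutator A_d·B_d·A_d⁻¹·B_d⁻¹ equals −2, i.e. the commutator is parabolic. -/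
set_option maxHeartbeats 2000000 in
/-- The Earle slice generators A_d, B_d have determinant 1 and parabolic
    commutator: Tr(A_d B_d A_d⁻¹ B_d⁻¹) = −2. -/
theorem earle_generators_det_and_parabolic_commutator
    (d : ℂ) (hd : d ≠ 0) (hd2 : 2 * d ^ 2 + 1 ≠ 0)
    (A B : Matrix (Fin 2) (Fin 2) ℂ)
    (hA : A = !![(d ^ 2 + 1) / d, d ^ 3 / (2 * d ^ 2 + 1);
                 (2 * d ^ 2 + 1) / d, d])
    (hB : B = !![(d ^ 2 + 1) / d, -(d ^ 3 / (2 * d ^ 2 + 1));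
                 -((2 * d ^ 2 + 1) / d), d]) :
    A.det = 1 ∧ B.det = 1 ∧ (A * B * A⁻¹ * B⁻¹).trace = -2 := by
  have hAdet : A.det = 1 := by
    subst hA; rw [Matrix.det_fin_two_of]; field_simp; rw [mul_div_cancel_right₀ _ (by rw [mul_comm]; exact hd2)]; ring
  have hBdet : B.det = 1 := by
    subst hB; rw [Matrix.det_fin_two_of]; field_simp; rw [mul_div_cancel_right₀ _ (by rw [mul_comm]; exact hd2)]; ring
  refine ⟨hAdet, hBdet, ?_⟩
  have hAinv : A⁻¹ = A.adjugate := by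
    rw [Matrix.inv_def, hAdet]; simp
  have hBinv : B⁻¹ = B.adjugate := by
    rw [Matrix.inv_def, hBdet]; simp
  rw [hAinv, hBinv]
  subst hA hB
  rw [Matrix.adjugate_fin_two, Matrix.adjugate_fin_two]
  simp only [Fin.isValue, Matrix.of_apply, Matrix.cons_val', Matrix.cons_val_zero,
    Matrix.cons_val_one, Matrix.head_cons, Matrix.empty_val', Matrix.cons_val_fin_one,
    Matrix.head_fin_const]
  rw [Matrix.mul_fin_two, Matrix.mul_fin_two, Matrix.mul_fin_two, Matrix.trace_fin_two]
  simp only [Fin.isValue, Matrix.of_apply, Matrix.cons_val', Matrix.cons_val_zero,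
    Matrix.cons_val_one, Matrix.head_cons, Matrix.empty_val', Matrix.cons_val_fin_one,
    Matrix.head_fin_const]
  obtain ⟨e, he⟩ : ∃ e, e = 2 * d ^ 2 + 1 := ⟨_, rfl⟩
  rw [← he] at hd2 ⊢
  field_simp
  subst he
  ring
end

section
/- For every real number M > 0 there exists a complex number d with Re d > M and Im d ≠ 0 such that, for the matrices A_d = [[(d²+1)/d, d³/(2d²+1)], [(2d²+1)/d, d]] and B_d = [[(d²+1)/d, −d³/(2d²+1)], [−(2d²+1)/d, d]], the trace T(d) := Tr(A_d⁻²·B_d) is a real number with |T(d)| > 2. -/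
open Complex Matrix


set_option maxHeartbeats 1000000 in
lemma trace_aux (d : ℂ) (hd0 : d ≠ 0) (h2d : (2*d^2 + 1 : ℂ) ≠ 0) :
    ((!![d, -(d ^ 3 / (2 * d ^ 2 + 1));
         -((2 * d ^ 2 + 1) / d), (d ^ 2 + 1) / d] : Matrix (Fin 2) (Fin 2) ℂ)^2 *
      !![(d ^ 2 + 1) / d, -(d ^ 3 / (2 * d ^ 2 + 1));
         -((2 * d ^ 2 + 1) / d), d]).trace = (8*d^4 + 6*d^2 + 1)/d := by
  rw [sq, Matrix.mul_fin_two, Matrix.mul_fin_two, Matrix.trace_fin_two_of]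
  have hden : (d^4 + d^6*6 + d^8*12 + d^10*8 : ℂ) ≠ 0 := by
    have e : (d^4 + d^6*6 + d^8*12 + d^10*8 : ℂ) = d^4*(2*d^2+1)^3 := by ring
    rw [e]
    exact mul_ne_zero (pow_ne_zero _ hd0) (pow_ne_zero _ h2d)
  rw [eq_div_iff hd0]
  have h2d' : d ^ 2 * 2 + 1 ≠ 0 := by rwa [mul_comm] at h2d
  field_simp
  ring

/-- For every M > 0 the hyperbolic locus of T_{2/1} = Tr(A_d⁻² B_d) meets the
    region {Re d > M} at non-real points: there is d with Re d > M, Im d ≠ 0,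
    such that Tr(A_d⁻² B_d) is real with absolute value > 2. -/
theorem hyperbolic_locus_meets_far_right_half_plane
    (M : ℝ) (hM : 0 < M) :
    ∃ d : ℂ, M < d.re ∧ d.im ≠ 0 ∧
      ∃ x : ℝ,
        (((!![(d ^ 2 + 1) / d, d ^ 3 / (2 * d ^ 2 + 1);
              (2 * d ^ 2 + 1) / d, d] : Matrix (Fin 2) (Fin 2) ℂ)⁻¹ ^ 2 *
          !![(d ^ 2 + 1) / d, -(d ^ 3 / (2 * d ^ 2 + 1));
             -((2 * d ^ 2 + 1) / d), d]).trace = (x : ℂ) ∧ 2 < |x|) := by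
  set a : ℝ := M + 1 with ha
  have ha1 : 1 < a := by simp [ha]; linarith
  have ha0 : 0 < a := by linarith
  set s : ℝ := Real.sqrt (256*a^4 + 96*a^2 + 1) with hsdef
  have hsnn : (0:ℝ) ≤ 256*a^4 + 96*a^2 + 1 := by positivity
  have hs : s^2 = 256*a^4 + 96*a^2 + 1 := Real.sq_sqrt hsnn
  have hs1 : 1 < s := by
    nlinarith [Real.sqrt_nonneg (256*a^4 + 96*a^2 + 1), hs]
  set v : ℝ := (8*a^2 + 3 + s)/8 with hvdef
  have hv0 : 0 < v := by rw [hvdef]; nlinarith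
  set b : ℝ := Real.sqrt v with hbdef
  have hb : b^2 = v := Real.sq_sqrt hv0.le
  have hb0 : 0 < b := Real.sqrt_pos.mpr hv0
  set d : ℂ := (a:ℝ) + (b:ℝ)*Complex.I with hd
  have hdre : d.re = a := by simp [hd]
  have hdim : d.im = b := by simp [hd]
  refine ⟨d, by rw [hdre]; linarith, by rw [hdim]; exact hb0.ne', -4*a*s, ?_, ?_⟩
  · -- trace equals x
    have hd0 : d ≠ 0 := by
      intro h
      apply hb0.ne'
      rw [← hdim, h, Complex.zero_im]
    have h2d : (2*d^2 + 1 : ℂ) ≠ 0 := by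
      intro h
      have him : (2*d^2 + 1 : ℂ).im = 0 := by rw [h]; simp
      simp [hd, Complex.add_im, Complex.mul_im, pow_two] at him
      nlinarith
    set A : Matrix (Fin 2) (Fin 2) ℂ :=
      !![(d ^ 2 + 1) / d, d ^ 3 / (2 * d ^ 2 + 1);
         (2 * d ^ 2 + 1) / d, d] with hA
    set B : Matrix (Fin 2) (Fin 2) ℂ :=
      !![(d ^ 2 + 1) / d, -(d ^ 3 / (2 * d ^ 2 + 1));
         -((2 * d ^ 2 + 1) / d), d] with hB
    set C : Matrix (Fin 2) (Fin 2) ℂ :=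
      !![d, -(d ^ 3 / (2 * d ^ 2 + 1));
         -((2 * d ^ 2 + 1) / d), (d ^ 2 + 1) / d] with hC
    have hAC : A * C = 1 := by
      have h2d' : d ^ 2 * 2 + 1 ≠ 0 := by rwa [mul_comm] at h2d
      ext i j
      fin_cases i <;> fin_cases j <;>
        simp [hA, hC, Matrix.mul_apply, Fin.sum_univ_two] <;>
        field_simp <;> ring
    have hAinv : A⁻¹ = C := Matrix.inv_eq_right_inv hAC
    have hx : (8*d^4 + 6*d^2 + 1 : ℂ) = ((-4*a*s : ℝ) : ℂ) * d := by
      rw [hd]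
      push_cast
      have hsC : (s:ℂ)^2 = 256*(a:ℂ)^4 + 96*(a:ℂ)^2 + 1 := by
        exact_mod_cast congrArg (fun t : ℝ => (t:ℂ)) hs
      have hbC : (b:ℂ)^2 = ((8*(a:ℂ)^2 + 3 + (s:ℂ))/8) := by
        have h' : (b^2 : ℝ) = (8*a^2 + 3 + s)/8 := by rw [hb, hvdef]
        exact_mod_cast congrArg (fun t : ℝ => (t:ℂ)) h'
      linear_combination
        ((6:ℂ)*(b:ℂ)^2 + (-8:ℂ)*(b:ℂ)^4 + (8:ℂ)*(b:ℂ)^4*Complex.I^2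
          + (32:ℂ)*(a:ℂ)*(b:ℂ)^3*Complex.I + (48:ℂ)*(a:ℂ)^2*(b:ℂ)^2) * Complex.I_sq
        + ((-3:ℂ) + (s:ℂ) + (8:ℂ)*(b:ℂ)^2 + (-32:ℂ)*(a:ℂ)*(b:ℂ)*Complex.I
          + (-40:ℂ)*(a:ℂ)^2) * hbC
        + (1/8:ℂ) * hsC
    have key : (C^2 * B).trace = (8*d^4 + 6*d^2 + 1)/d := by
      rw [hC, hB]; exact trace_aux d hd0 h2d
    rw [hAinv, key, hx, mul_div_assoc, div_self hd0, mul_one]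
  · rw [abs_of_nonpos (by nlinarith)]
    nlinarith
end
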